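/- Let n ≥ 1, T > 0 and M > 0. Let u : ℝⁿ × [0,T] → ℝ be a smooth positive solution of the heat equation ∂ₜu = Δu on ℝⁿ × [0,T] satisfying 0 < u ≤ M everywhere. Then the function Φ(x,t) := t · ‖∇u(x,t)‖² / u(x,t) − u(x,t)·log(M / u(x,t)) satisfies ΔΦ − ∂ₜΦ ≥ 0 on ℝⁿ × (0,T], i.e. Φ is a subsolution of the heat equation. -/

import Mathlib

open Set

/-- The Laplacian of `f : ℝⁿ → ℝ` (flat Euclidean metric): the trace of the
second derivative, i.e. the sum of the second partial derivatives. -/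
noncomputable def lap {n : ℕ} (f : EuclideanSpace ℝ (Fin n) → ℝ)
    (x : EuclideanSpace ℝ (Fin n)) : ℝ :=
  ∑ i : Fin n,
    fderiv ℝ (fun y => fderiv ℝ f y (EuclideanSpace.single i 1)) x
      (EuclideanSpace.single i 1)

noncomputable section
variable {n : ℕ}
local notation "E" => EuclideanSpace ℝ (Fin n)

/-- partial derivative -/
noncomputable def pd (i : Fin n) (f : E → ℝ) (y : E) : ℝ :=
  fderiv ℝ f y (EuclideanSpace.single i 1)

lemma smooth_pd {f : E → ℝ} (hf : ContDiff ℝ (⊤:ℕ∞) f) (i : Fin n) :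
    ContDiff ℝ (⊤:ℕ∞) (pd i f) :=
  (hf.fderiv_right (by exact_mod_cast le_rfl)).clm_apply contDiff_const

lemma grad_norm_sq (g : E → ℝ) (y : E) :
    ‖gradient g y‖ ^ 2 = ∑ i : Fin n, pd i g y * pd i g y := by
  have h1 : ∀ i, gradient g y i = pd i g y := by
    intro i
    have : (gradient g y) i = @inner ℝ _ _ (gradient g y) (EuclideanSpace.single i 1) := by
      rw [real_inner_comm, EuclideanSpace.inner_single_left]; simp
    rw [this]
    exact InnerProductSpace.toDual_symm_apply
  rw [EuclideanSpace.norm_eq]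
  rw [Real.sq_sqrt (by positivity)]
  refine Finset.sum_congr rfl fun i _ => ?_
  rw [h1, Real.norm_eq_abs, sq_abs, sq]

lemma pd_comm {f : E → ℝ} (hf : ContDiff ℝ (⊤:ℕ∞) f) (i j : Fin n) (y : E) :
    pd i (pd j f) y = pd j (pd i f) y := by
  have hd : ∀ z, HasFDerivAt f (fderiv ℝ f z) z := fun z =>
    (hf.differentiable (by simp) z).hasFDerivAt
  have hd2 : HasFDerivAt (fderiv ℝ f) (fderiv ℝ (fderiv ℝ f) y) y :=
    (((hf.fderiv_right (m := (⊤:ℕ∞)) (by exact_mod_cast le_rfl)).differentiable (by simp)) y).hasFDerivAt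
  have hsym := second_derivative_symmetric hd hd2
  have key : ∀ v w : E, fderiv ℝ (fun z => fderiv ℝ f z v) y w
      = fderiv ℝ (fderiv ℝ f) y w v := by
    intro v w
    have : HasFDerivAt (fun z => fderiv ℝ f z v)
        ((ContinuousLinearMap.apply ℝ ℝ v).comp (fderiv ℝ (fderiv ℝ f) y)) y :=
      (ContinuousLinearMap.apply ℝ ℝ v).hasFDerivAt.comp y hd2
    rw [this.fderiv]; rfl
  unfold pd
  rw [key, key, hsym]

lemma smooth_N {f : E → ℝ} (hf : ContDiff ℝ (⊤:ℕ∞) f) :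
    ContDiff ℝ (⊤:ℕ∞) (fun z => ∑ j : Fin n, pd j f z * pd j f z) :=
  ContDiff.sum fun j _ => (smooth_pd hf j).mul (smooth_pd hf j)
lemma hD {g : E → ℝ} (hg : ContDiff ℝ (⊤:ℕ∞) g) (y : E) :
    HasFDerivAt g (fderiv ℝ g y) y :=
  (hg.differentiable (by simp) y).hasFDerivAt
lemma pd_N {f : E → ℝ} (hf : ContDiff ℝ (⊤:ℕ∞) f) (i : Fin n) (y : E) :
    fderiv ℝ (fun z => ∑ j : Fin n, pd j f z * pd j f z) y (EuclideanSpace.single i 1)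
      = ∑ j : Fin n, 2 * pd j f y * pd i (pd j f) y := by
  have h : HasFDerivAt (fun z => ∑ j : Fin n, pd j f z * pd j f z)
      (∑ j : Fin n, (pd j f y • fderiv ℝ (pd j f) y + pd j f y • fderiv ℝ (pd j f) y)) y :=
    HasFDerivAt.fun_sum fun j _ => (hD (smooth_pd hf j) y).mul (hD (smooth_pd hf j) y)
  rw [h.fderiv]
  simp only [ContinuousLinearMap.coe_sum', Finset.sum_apply,
    ContinuousLinearMap.add_apply, ContinuousLinearMap.smul_apply, smul_eq_mul]
  exact Finset.sum_congr rfl fun j _ => by show _ = 2 * pd j f y * fderiv ℝ (pd j f) y _; ring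

lemma pd_Phi {f : E → ℝ} (hf : ContDiff ℝ (⊤:ℕ∞) f) (hfpos : ∀ z, 0 < f z)
    (t M : ℝ) (i : Fin n) (y : E) :
    fderiv ℝ (fun z => t * ((∑ j : Fin n, pd j f z * pd j f z) * (f z)⁻¹)
        - f z * (Real.log M - Real.log (f z))) y (EuclideanSpace.single i 1)
      = t * ((∑ j : Fin n, 2 * pd j f y * pd i (pd j f) y) * (f y)⁻¹
          - (∑ j : Fin n, pd j f y * pd j f y) * pd i f y * ((f y)^2)⁻¹)
        - pd i f y * (Real.log M - Real.log (f y)) + pd i f y := by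
  have hne : f y ≠ 0 := (hfpos y).ne'
  have hNs : ContDiff ℝ (⊤:ℕ∞) (fun z => ∑ j : Fin n, pd j f z * pd j f z) := smooth_N hf
  have hfd := hD hf y
  have hNd := hD hNs y
  have hinv : HasFDerivAt (fun z => (f z)⁻¹) ((-(f y ^ 2)⁻¹) • fderiv ℝ f y) y :=
    (hasDerivAt_inv hne).comp_hasFDerivAt y hfd
  have hlog : HasFDerivAt (fun z => Real.log (f z)) ((f y)⁻¹ • fderiv ℝ f y) y :=
    (Real.hasDerivAt_log hne).comp_hasFDerivAt y hfd
  have htot : HasFDerivAt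
      (fun z => t * ((∑ j : Fin n, pd j f z * pd j f z) * (f z)⁻¹)
        - f z * (Real.log M - Real.log (f z)))
      (t • ((∑ j : Fin n, pd j f y * pd j f y) • ((-(f y ^ 2)⁻¹) • fderiv ℝ f y)
          + (f y)⁻¹ • fderiv ℝ (fun z => ∑ j : Fin n, pd j f z * pd j f z) y)
        - (f y • ((0 : E →L[ℝ] ℝ) - (f y)⁻¹ • fderiv ℝ f y)
            + (Real.log M - Real.log (f y)) • fderiv ℝ f y)) y :=
    ((hNd.mul hinv).const_mul t).sub
      (hfd.mul ((hasFDerivAt_const (Real.log M) y).sub hlog))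
  rw [htot.fderiv]
  simp only [ContinuousLinearMap.coe_sub', ContinuousLinearMap.coe_smul',
    Pi.sub_apply, Pi.smul_apply, ContinuousLinearMap.add_apply,
    ContinuousLinearMap.smul_apply, ContinuousLinearMap.zero_apply,
    ContinuousLinearMap.sub_apply, smul_eq_mul]
  rw [pd_N hf i y]
  have : fderiv ℝ f y (EuclideanSpace.single i 1) = pd i f y := rfl
  rw [this]
  field_simp
  ring

lemma pd_Phi1 {f : E → ℝ} (hf : ContDiff ℝ (⊤:ℕ∞) f) (hfpos : ∀ z, 0 < f z)
    (t M : ℝ) (i : Fin n) (x : E) :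
    fderiv ℝ (fun y => t * ((∑ j : Fin n, 2 * pd j f y * pd i (pd j f) y) * (f y)⁻¹
          - (∑ j : Fin n, pd j f y * pd j f y) * pd i f y * ((f y)^2)⁻¹)
        - pd i f y * (Real.log M - Real.log (f y)) + pd i f y) x (EuclideanSpace.single i 1)
      = t * ( (∑ j : Fin n, 2 * (pd i (pd j f) x * pd i (pd j f) x
                + pd j f x * pd i (pd i (pd j f)) x)) / f x
          - (∑ j : Fin n, 2 * pd j f x * pd i (pd j f) x) * pd i f x / (f x)^2
          - ((∑ j : Fin n, 2 * pd j f x * pd i (pd j f) x) * pd i f x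
              + (∑ j : Fin n, pd j f x * pd j f x) * pd i (pd i f) x) / (f x)^2
          + 2 * (∑ j : Fin n, pd j f x * pd j f x) * (pd i f x)^2 / (f x)^3 )
        - pd i (pd i f) x * (Real.log M - Real.log (f x))
        + (pd i f x)^2 / f x + pd i (pd i f) x := by
  have hne : f x ≠ 0 := (hfpos x).ne'
  have hfd := hD hf x
  have hai := hD (smooth_pd hf i) x
  have hNd := hD (smooth_N hf) x
  have hsum1 : HasFDerivAt (fun y => ∑ j : Fin n, 2 * pd j f y * pd i (pd j f) y)
      (∑ j : Fin n, ((2 * pd j f x) • fderiv ℝ (pd i (pd j f)) x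
        + pd i (pd j f) x • ((2:ℝ) • fderiv ℝ (pd j f) x))) x :=
    HasFDerivAt.fun_sum fun j _ =>
      (((hD (smooth_pd hf j) x).const_mul 2).mul (hD (smooth_pd (smooth_pd hf j) i) x))
  have hinv : HasFDerivAt (fun y => (f y)⁻¹) ((-(f x ^ 2)⁻¹) • fderiv ℝ f x) x :=
    (hasDerivAt_inv hne).comp_hasFDerivAt x hfd
  have hsq : HasFDerivAt (fun y => (f y)^2) ((2 * f x ^ 1 : ℝ) • fderiv ℝ f x) x := by
    simpa [Function.comp_def] using (hasDerivAt_pow 2 (f x)).comp_hasFDerivAt x hfd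
  have hinv2 : HasFDerivAt (fun y => ((f y)^2)⁻¹)
      ((-((f x ^ 2) ^ 2)⁻¹) • ((2 * f x ^ 1 : ℝ) • fderiv ℝ f x)) x :=
    (hasDerivAt_inv (pow_ne_zero 2 hne)).comp_hasFDerivAt x hsq
  have hlog : HasFDerivAt (fun y => Real.log (f y)) ((f x)⁻¹ • fderiv ℝ f x) x :=
    (Real.hasDerivAt_log hne).comp_hasFDerivAt x hfd
  have htot := ((((hsum1.mul hinv).sub ((hNd.mul hai).mul hinv2)).const_mul t).sub
      (hai.mul ((hasFDerivAt_const (Real.log M) x).sub hlog))).add hai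
  have htot' : HasFDerivAt (fun y => t * ((∑ j : Fin n, 2 * pd j f y * pd i (pd j f) y) * (f y)⁻¹
          - (∑ j : Fin n, pd j f y * pd j f y) * pd i f y * ((f y)^2)⁻¹)
        - pd i f y * (Real.log M - Real.log (f y)) + pd i f y) _ x := htot
  rw [htot'.fderiv]
  simp only [ContinuousLinearMap.coe_sub', ContinuousLinearMap.coe_smul',
    ContinuousLinearMap.coe_add', Pi.sub_apply, Pi.smul_apply, Pi.add_apply,
    ContinuousLinearMap.add_apply, ContinuousLinearMap.smul_apply,
    ContinuousLinearMap.zero_apply, ContinuousLinearMap.sub_apply,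
    ContinuousLinearMap.coe_sum', Finset.sum_apply, smul_eq_mul, Pi.mul_apply]
  rw [pd_N hf i x]
  have hpd : ∀ (g : E → ℝ) (y : E), fderiv ℝ g y (EuclideanSpace.single i 1) = pd i g y :=
    fun _ _ => rfl
  simp only [hpd, nsmul_eq_mul, Nat.cast_ofNat]
  have hX : (∑ j : Fin n, (2 * pd j f x * pd i (pd i (pd j f)) x
      + pd i (pd j f) x * (2 * pd i (pd j f) x)))
      = ∑ j : Fin n, 2 * (pd i (pd j f) x * pd i (pd j f) x
        + pd j f x * pd i (pd i (pd j f)) x) :=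
    Finset.sum_congr rfl fun j _ => by ring
  rw [hX]
  field_simp
  ring


lemma pd_sum {n : ℕ} {g : Fin n → EuclideanSpace ℝ (Fin n) → ℝ}
    (hg : ∀ k, ContDiff ℝ (⊤:ℕ∞) (g k)) (j : Fin n) (x : EuclideanSpace ℝ (Fin n)) :
    pd j (fun z => ∑ k : Fin n, g k z) x = ∑ k : Fin n, pd j (g k) x := by
  have h : HasFDerivAt (fun z => ∑ k : Fin n, g k z)
      (∑ k : Fin n, fderiv ℝ (g k) x) x :=
    HasFDerivAt.fun_sum fun k _ => hD (hg k) x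
  show fderiv ℝ _ x _ = _
  rw [h.fderiv]
  simp [pd]

lemma pd_lap {n : ℕ} {f : EuclideanSpace ℝ (Fin n) → ℝ} (hf : ContDiff ℝ (⊤:ℕ∞) f)
    (j : Fin n) (x : EuclideanSpace ℝ (Fin n)) :
    pd j (fun z => lap f z) x = ∑ i : Fin n, pd i (pd i (pd j f)) x := by
  have h0 : (fun z => lap f z) = fun z => ∑ i : Fin n, pd i (pd i f) z := rfl
  rw [h0, pd_sum (fun k => smooth_pd (smooth_pd hf k) k) j x]
  refine Finset.sum_congr rfl fun i _ => ?_
  rw [pd_comm (smooth_pd hf i) j i x]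
  have h1 : pd j (pd i f) = pd i (pd j f) := funext fun y => pd_comm hf j i y
  rw [h1]

section Mixed
variable {T : ℝ} {u : EuclideanSpace ℝ (Fin n) → ℝ → ℝ}

lemma slice_smooth (hT : 0 < T)
    (hsmooth : ContDiffOn ℝ (⊤:ℕ∞) (fun p : (EuclideanSpace ℝ (Fin n)) × ℝ => u p.1 p.2)
      (univ ×ˢ Icc 0 T)) {t : ℝ} (ht : t ∈ Icc 0 T) :
    ContDiff ℝ (⊤:ℕ∞) (fun y => u y t) := by
  rw [← contDiffOn_univ]
  exact hsmooth.comp ((contDiff_id.prodMk contDiff_const).contDiffOn)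
    (fun y _ => ⟨mem_univ _, ht⟩)

lemma spatial_fderiv_eq (hT : 0 < T)
    (hsmooth : ContDiffOn ℝ (⊤:ℕ∞) (fun p : (EuclideanSpace ℝ (Fin n)) × ℝ => u p.1 p.2)
      (univ ×ˢ Icc 0 T)) {s : ℝ} (hs : s ∈ Icc 0 T) (y : E) (v : E) :
    fderiv ℝ (fun z => u z s) y v
      = fderivWithin ℝ (fun p : (EuclideanSpace ℝ (Fin n)) × ℝ => u p.1 p.2)
          (univ ×ˢ Icc 0 T) (y, s) (v, 0) := by
  set F := fun p : (EuclideanSpace ℝ (Fin n)) × ℝ => u p.1 p.2 with hF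
  set Ω : Set ((EuclideanSpace ℝ (Fin n)) × ℝ) := univ ×ˢ Icc 0 T with hΩ
  have hmem : (y, s) ∈ Ω := ⟨mem_univ _, hs⟩
  have hFd : HasFDerivWithinAt F (fderivWithin ℝ F Ω (y, s)) Ω (y, s) :=
    ((hsmooth.differentiableOn (by simp)) (y, s) hmem).hasFDerivWithinAt
  have hA : HasFDerivAt (fun z : E => ((z, s) : (EuclideanSpace ℝ (Fin n)) × ℝ))
      ((ContinuousLinearMap.id ℝ (EuclideanSpace ℝ (Fin n))).prod 0) y :=
    (hasFDerivAt_id y).prodMk (hasFDerivAt_const s y)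
  have hcomp := hFd.comp y (hA.hasFDerivWithinAt (s := (univ : Set (EuclideanSpace ℝ (Fin n))))) (by intro z _; exact ⟨mem_univ _, hs⟩)
  rw [hasFDerivWithinAt_univ] at hcomp
  have hc : HasFDerivAt (fun z : E => u z s) ((fderivWithin ℝ F Ω (y, s)).comp
      ((ContinuousLinearMap.id ℝ (EuclideanSpace ℝ (Fin n))).prod 0)) y := hcomp
  rw [hc.fderiv]; rfl

lemma time_deriv_eq (hT : 0 < T)
    (hsmooth : ContDiffOn ℝ (⊤:ℕ∞) (fun p : (EuclideanSpace ℝ (Fin n)) × ℝ => u p.1 p.2)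
      (univ ×ˢ Icc 0 T)) {s : ℝ} (hs : s ∈ Icc 0 T) (x : E) :
    HasDerivWithinAt (fun r => u x r)
      (fderivWithin ℝ (fun p : (EuclideanSpace ℝ (Fin n)) × ℝ => u p.1 p.2)
          (univ ×ˢ Icc 0 T) (x, s) (0, 1)) (Icc 0 T) s := by
  set F := fun p : (EuclideanSpace ℝ (Fin n)) × ℝ => u p.1 p.2 with hF
  set Ω : Set ((EuclideanSpace ℝ (Fin n)) × ℝ) := univ ×ˢ Icc 0 T with hΩ
  have hmem : (x, s) ∈ Ω := ⟨mem_univ _, hs⟩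
  have hFd : HasFDerivWithinAt F (fderivWithin ℝ F Ω (x, s)) Ω (x, s) :=
    ((hsmooth.differentiableOn (by simp)) (x, s) hmem).hasFDerivWithinAt
  have hB : HasDerivWithinAt (fun r : ℝ => ((x, r) : (EuclideanSpace ℝ (Fin n)) × ℝ))
      ((0 : E), (1 : ℝ)) (Icc 0 T) s :=
    ((hasDerivAt_const s x).prodMk (hasDerivAt_id s)).hasDerivWithinAt
  exact hFd.comp_hasDerivWithinAt s hB (fun r hr => ⟨mem_univ _, hr⟩)

lemma derivWithin_time_eq (hT : 0 < T)
    (hsmooth : ContDiffOn ℝ (⊤:ℕ∞) (fun p : (EuclideanSpace ℝ (Fin n)) × ℝ => u p.1 p.2)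
      (univ ×ˢ Icc 0 T)) {s : ℝ} (hs : s ∈ Icc 0 T) (x : E) :
    derivWithin (fun r => u x r) (Icc 0 T) s
      = fderivWithin ℝ (fun p : (EuclideanSpace ℝ (Fin n)) × ℝ => u p.1 p.2)
          (univ ×ˢ Icc 0 T) (x, s) (0, 1) :=
  (time_deriv_eq hT hsmooth hs x).derivWithin (uniqueDiffOn_Icc hT s hs)

lemma mixed_deriv (hT : 0 < T)
    (hsmooth : ContDiffOn ℝ (⊤:ℕ∞) (fun p : (EuclideanSpace ℝ (Fin n)) × ℝ => u p.1 p.2)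
      (univ ×ˢ Icc 0 T)) {t : ℝ} (ht : t ∈ Icc 0 T) (x : E) (i : Fin n) :
    HasDerivWithinAt (fun s => fderiv ℝ (fun z => u z s) x (EuclideanSpace.single i 1))
      (fderiv ℝ (fun z => derivWithin (fun r => u z r) (Icc 0 T) t) x
        (EuclideanSpace.single i 1)) (Icc 0 T) t := by
  set F := fun p : (EuclideanSpace ℝ (Fin n)) × ℝ => u p.1 p.2 with hF
  set Ω : Set ((EuclideanSpace ℝ (Fin n)) × ℝ) := univ ×ˢ Icc 0 T with hΩdef
  have hΩ : UniqueDiffOn ℝ Ω := uniqueDiffOn_univ.prod (uniqueDiffOn_Icc hT)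
  have hp : ((x, t) : (EuclideanSpace ℝ (Fin n)) × ℝ) ∈ Ω := ⟨mem_univ _, ht⟩
  set f' := fderivWithin ℝ F Ω with hf'def
  set f'' := fderivWithin ℝ f' Ω (x, t) with hf''def
  have hf' : ContDiffOn ℝ (⊤:ℕ∞) f' Ω :=
    hsmooth.fderivWithin hΩ (by exact_mod_cast le_rfl)
  have hf'' : HasFDerivWithinAt f' f'' Ω (x, t) :=
    ((hf'.differentiableOn (by simp)) (x, t) hp).hasFDerivWithinAt
  -- symmetry
  have hclos : ((x, t) : (EuclideanSpace ℝ (Fin n)) × ℝ) ∈ closure (interior Ω) := by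
    rw [hΩdef, interior_prod_eq, interior_univ, interior_Icc, closure_prod_eq,
      closure_univ]
    exact ⟨mem_univ _, by rw [closure_Ioo hT.ne]; exact ht⟩
  have hsym : ∀ v w, f'' v w = f'' w v := by
    have h := (hsmooth (x, t) hp).isSymmSndFDerivWithinAt
      (by rw [minSmoothness_of_isRCLikeNormedField, show ((2:WithTop ℕ∞)) = (((2:ℕ∞)) : WithTop ℕ∞) from rfl]; exact WithTop.coe_le_coe.2 le_top) hΩ hclos hp
    exact fun v w => h v w
  -- time derivative of the spatial partial
  have happly : HasFDerivWithinAt (fun p => f' p ((EuclideanSpace.single i 1 : E), (0:ℝ)))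
      ((ContinuousLinearMap.apply ℝ ℝ ((EuclideanSpace.single i 1 : E), (0:ℝ))).comp f'')
      Ω (x, t) :=
    (ContinuousLinearMap.apply ℝ ℝ ((EuclideanSpace.single i 1 : E), (0:ℝ))).hasFDerivAt.comp_hasFDerivWithinAt (x, t) hf''
  have hB : HasDerivWithinAt (fun r : ℝ => ((x, r) : (EuclideanSpace ℝ (Fin n)) × ℝ))
      ((0 : E), (1 : ℝ)) (Icc 0 T) t :=
    ((hasDerivAt_const t x).prodMk (hasDerivAt_id t)).hasDerivWithinAt
  have htder : HasDerivWithinAt (fun s => f' (x, s) ((EuclideanSpace.single i 1 : E), (0:ℝ)))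
      (f'' (0, 1) ((EuclideanSpace.single i 1 : E), (0:ℝ))) (Icc 0 T) t :=
    happly.comp_hasDerivWithinAt t hB (fun r hr => ⟨mem_univ _, hr⟩)
  -- congr to the pd function
  have hcongr : HasDerivWithinAt
      (fun s => fderiv ℝ (fun z => u z s) x (EuclideanSpace.single i 1))
      (f'' (0, 1) ((EuclideanSpace.single i 1 : E), (0:ℝ))) (Icc 0 T) t := by
    apply htder.congr
    · intro s hs; exact spatial_fderiv_eq hT hsmooth hs x _
    · exact spatial_fderiv_eq hT hsmooth ht x _
  -- identify the value
  have hval : f'' (0, 1) ((EuclideanSpace.single i 1 : E), (0:ℝ))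
      = fderiv ℝ (fun z => derivWithin (fun r => u z r) (Icc 0 T) t) x
          (EuclideanSpace.single i 1) := by
    rw [hsym]
    have happly2 : HasFDerivWithinAt (fun p => f' p ((0:E), (1:ℝ)))
        ((ContinuousLinearMap.apply ℝ ℝ ((0:E), (1:ℝ))).comp f'') Ω (x, t) :=
      (ContinuousLinearMap.apply ℝ ℝ ((0:E), (1:ℝ))).hasFDerivAt.comp_hasFDerivWithinAt (x, t) hf''
    have hA : HasFDerivAt (fun z : E => ((z, t) : (EuclideanSpace ℝ (Fin n)) × ℝ))
        ((ContinuousLinearMap.id ℝ (EuclideanSpace ℝ (Fin n))).prod 0) x :=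
      (hasFDerivAt_id x).prodMk (hasFDerivAt_const t x)
    have hcomp := happly2.comp x (hA.hasFDerivWithinAt (s := univ)) (by intro z _; exact ⟨mem_univ _, ht⟩)
    rw [hasFDerivWithinAt_univ] at hcomp
    have heqfun : (fun z : E => f' (z, t) ((0:E), (1:ℝ)))
        = fun z => derivWithin (fun r => u z r) (Icc 0 T) t := by
      funext z
      rw [derivWithin_time_eq hT hsmooth ht z]
    rw [← heqfun]
    have hc2 : HasFDerivAt (fun z : E => f' (z, t) ((0:E), (1:ℝ)))
        (((ContinuousLinearMap.apply ℝ ℝ ((0:E), (1:ℝ))).comp f'').comp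
          ((ContinuousLinearMap.id ℝ (EuclideanSpace ℝ (Fin n))).prod 0)) x := hcomp
    rw [hc2.fderiv]
    rfl
  rw [← hval]
  exact hcongr

end Mixed
end
lemma key_algebra (m : ℕ) (A : Fin m → ℝ) (B D : Fin m → Fin m → ℝ)
    (V c t : ℝ) (hV : V ≠ 0) :
    (∑ i : Fin m, (t * ((∑ j : Fin m, 2 * (B j i * B j i + A j * D j i)) / V
          - (∑ j : Fin m, 2 * A j * B j i) * A i / V^2
          - ((∑ j : Fin m, 2 * A j * B j i) * A i + (∑ j : Fin m, A j * A j) * B i i) / V^2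
          + 2 * (∑ j : Fin m, A j * A j) * (A i)^2 / V^3)
        - B i i * c + (A i)^2 / V + B i i))
      - (1 * ((∑ j : Fin m, A j * A j) * V⁻¹)
          + t * ((∑ j : Fin m, ((∑ i : Fin m, D j i) * A j + A j * (∑ i : Fin m, D j i))) * V⁻¹
            + (∑ j : Fin m, A j * A j) * (-(V^2)⁻¹ * (∑ i : Fin m, B i i)))
          - ((∑ i : Fin m, B i i) * c + V * (0 - V⁻¹ * (∑ i : Fin m, B i i))))
      = 2 * t / V^3 * ∑ i : Fin m, ∑ j : Fin m, (V * B j i - A j * A i)^2 := by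
  set P := ∑ j : Fin m, A j * A j with hP
  set L := ∑ i : Fin m, B i i with hL
  have h1 : ∀ i, (t * ((∑ j : Fin m, 2 * (B j i * B j i + A j * D j i)) / V
          - (∑ j : Fin m, 2 * A j * B j i) * A i / V^2
          - ((∑ j : Fin m, 2 * A j * B j i) * A i + P * B i i) / V^2
          + 2 * P * (A i)^2 / V^3)
        - B i i * c + (A i)^2 / V + B i i)
      = (2*t/V) * (∑ j : Fin m, B j i * B j i) + (2*t/V) * (∑ j : Fin m, A j * D j i)
        - (4*t/V^2) * ((∑ j : Fin m, A j * B j i) * A i)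
        - (t*P/V^2) * B i i + (2*t*P/V^3) * (A i)^2
        - c * B i i + (1/V) * (A i)^2 + B i i := by
    intro i
    have e1 : (∑ j : Fin m, 2 * (B j i * B j i + A j * D j i))
        = 2 * (∑ j : Fin m, B j i * B j i) + 2 * (∑ j : Fin m, A j * D j i) := by
      simp only [mul_add]
      rw [Finset.sum_add_distrib, ← Finset.mul_sum, ← Finset.mul_sum]
    have e2 : (∑ j : Fin m, 2 * A j * B j i) = 2 * (∑ j : Fin m, A j * B j i) := by
      simp only [mul_assoc]
      rw [← Finset.mul_sum]
    rw [e1, e2]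
    field_simp
    ring
  rw [Finset.sum_congr rfl (fun i _ => h1 i)]
  have h3 : (∑ j : Fin m, ((∑ i : Fin m, D j i) * A j + A j * (∑ i : Fin m, D j i)))
      = 2 * ∑ i : Fin m, (∑ j : Fin m, A j * D j i) := by
    have e : ∀ j, (∑ i : Fin m, D j i) * A j + A j * (∑ i : Fin m, D j i)
        = 2 * ∑ i : Fin m, A j * D j i := by
      intro j
      rw [Finset.sum_mul, Finset.mul_sum, Finset.mul_sum, ← Finset.sum_add_distrib]
      exact Finset.sum_congr rfl fun i _ => by ring
    rw [Finset.sum_congr rfl fun j _ => e j, ← Finset.mul_sum, Finset.sum_comm]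
  rw [h3]
  have h4 : ∀ i, (∑ j : Fin m, (V * B j i - A j * A i)^2)
      = V^2 * (∑ j : Fin m, B j i * B j i)
        - 2*V*((∑ j : Fin m, A j * B j i) * A i) + P * (A i)^2 := by
    intro i
    have : ∀ j, (V * B j i - A j * A i)^2
        = V^2 * (B j i * B j i) - 2*V*((A j * B j i) * A i) + (A j * A j) * (A i)^2 := by
      intro j; ring
    rw [Finset.sum_congr rfl (fun j _ => this j)]
    rw [Finset.sum_add_distrib, Finset.sum_sub_distrib, ← Finset.mul_sum, hP,
      ← Finset.sum_mul, ← Finset.mul_sum, ← Finset.sum_mul]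
  rw [Finset.sum_congr rfl (fun i _ => h4 i)]
  simp only [Finset.sum_add_distrib, Finset.sum_sub_distrib, ← Finset.mul_sum,
    ← Finset.sum_mul]
  set Q := ∑ i : Fin m, ∑ j : Fin m, B j i * B j i with hQ
  set TT := ∑ i : Fin m, ∑ j : Fin m, A j * D j i with hTT
  set S2 := ∑ i : Fin m, (∑ j : Fin m, A j * B j i) * A i with hS2
  set P2 := ∑ i : Fin m, (A i)^2 with hP2
  have hPP : P2 = P := Finset.sum_congr rfl fun i _ => sq (A i)
  rw [hPP]
  field_simp
  ring


/-- For a positive bounded solution `u` of the heat equation on ℝⁿ × [0,T],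
the function `Φ = t·‖∇u‖²/u − u·log(M/u)` is a subsolution of the heat
equation on ℝⁿ × (0,T]: `ΔΦ − ∂ₜΦ ≥ 0`. -/
theorem hamilton_quantity_subsolution
    (n : ℕ) (hn : 1 ≤ n) (T M : ℝ) (hT : 0 < T) (hM : 0 < M)
    (u : EuclideanSpace ℝ (Fin n) → ℝ → ℝ)
    (hsmooth : ContDiffOn ℝ (⊤ : ℕ∞)
      (fun p : EuclideanSpace ℝ (Fin n) × ℝ => u p.1 p.2) (univ ×ˢ Icc 0 T))
    (hpos : ∀ x, ∀ t ∈ Icc (0 : ℝ) T, 0 < u x t)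
    (hbound : ∀ x, ∀ t ∈ Icc (0 : ℝ) T, u x t ≤ M)
    (hheat : ∀ x, ∀ t ∈ Icc (0 : ℝ) T,
      derivWithin (fun s => u x s) (Icc 0 T) t = lap (fun y => u y t) x) :
    ∀ x, ∀ t ∈ Ioc (0 : ℝ) T,
      0 ≤ lap (fun y =>
              t * (‖gradient (fun z => u z t) y‖ ^ 2 / u y t)
                - u y t * Real.log (M / u y t)) x
          - derivWithin (fun s =>
              s * (‖gradient (fun z => u z s) x‖ ^ 2 / u x s)
                - u x s * Real.log (M / u x s)) (Icc 0 T) t := by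
  intro x t ht
  have ht' : t ∈ Icc (0:ℝ) T := ⟨ht.1.le, ht.2⟩
  have hfA : ContDiff ℝ (⊤:ℕ∞) (fun y => u y t) := slice_smooth hT hsmooth ht'
  have hposA : ∀ z, 0 < (fun y : EuclideanSpace ℝ (Fin n) => u y t) z :=
    fun z => hpos z t ht'
  have hne : u x t ≠ 0 := (hpos x t ht').ne'
  -- Laplacian side
  have hlap : lap (fun y =>
        t * (‖gradient (fun z => u z t) y‖ ^ 2 / u y t)
          - u y t * Real.log (M / u y t)) x
      = ∑ i : Fin n,
        (t * ((∑ j : Fin n, 2 * (pd i (pd j (fun z => u z t)) x * pd i (pd j (fun z => u z t)) x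
              + pd j (fun z => u z t) x * pd i (pd i (pd j (fun z => u z t))) x)) / u x t
          - (∑ j : Fin n, 2 * pd j (fun z => u z t) x * pd i (pd j (fun z => u z t)) x)
              * pd i (fun z => u z t) x / (u x t)^2
          - ((∑ j : Fin n, 2 * pd j (fun z => u z t) x * pd i (pd j (fun z => u z t)) x)
                * pd i (fun z => u z t) x
              + (∑ j : Fin n, pd j (fun z => u z t) x * pd j (fun z => u z t) x)
                * pd i (pd i (fun z => u z t)) x) / (u x t)^2
          + 2 * (∑ j : Fin n, pd j (fun z => u z t) x * pd j (fun z => u z t) x)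
              * (pd i (fun z => u z t) x)^2 / (u x t)^3)
        - pd i (pd i (fun z => u z t)) x * (Real.log M - Real.log (u x t))
        + (pd i (fun z => u z t) x)^2 / u x t + pd i (pd i (fun z => u z t)) x) := by
    have harg : (fun y => t * (‖gradient (fun z => u z t) y‖ ^ 2 / u y t)
          - u y t * Real.log (M / u y t))
        = fun y => t * ((∑ j : Fin n, pd j (fun z => u z t) y * pd j (fun z => u z t) y)
            * (u y t)⁻¹) - u y t * (Real.log M - Real.log (u y t)) := by
      funext y
      rw [grad_norm_sq, Real.log_div hM.ne' (hpos y t ht').ne', div_eq_mul_inv]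
    rw [harg]
    unfold lap
    refine Finset.sum_congr rfl fun i _ => ?_
    have h1 : (fun y => fderiv ℝ (fun y =>
          t * ((∑ j : Fin n, pd j (fun z => u z t) y * pd j (fun z => u z t) y) * (u y t)⁻¹)
            - u y t * (Real.log M - Real.log (u y t))) y (EuclideanSpace.single i 1))
        = fun y => t * ((∑ j : Fin n, 2 * pd j (fun z => u z t) y * pd i (pd j (fun z => u z t)) y)
              * (u y t)⁻¹
            - (∑ j : Fin n, pd j (fun z => u z t) y * pd j (fun z => u z t) y)
              * pd i (fun z => u z t) y * ((u y t)^2)⁻¹)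
          - pd i (fun z => u z t) y * (Real.log M - Real.log (u y t))
          + pd i (fun z => u z t) y :=
      funext fun y => pd_Phi hfA hposA t M i y
    rw [h1]
    exact pd_Phi1 hfA hposA t M i x
  -- time side
  have hu' : HasDerivWithinAt (fun s => u x s)
      (∑ i : Fin n, pd i (pd i (fun z => u z t)) x) (Icc 0 T) t := by
    have h0 := time_deriv_eq hT hsmooth ht' x
    have h1 : fderivWithin ℝ (fun p : EuclideanSpace ℝ (Fin n) × ℝ => u p.1 p.2)
        (univ ×ˢ Icc 0 T) (x, t) ((0 : EuclideanSpace ℝ (Fin n)), (1:ℝ))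
        = ∑ i : Fin n, pd i (pd i (fun z => u z t)) x := by
      rw [← derivWithin_time_eq hT hsmooth ht' x, hheat x t ht']; rfl
    rwa [h1] at h0
  have hW : ∀ j : Fin n, HasDerivWithinAt (fun s => pd j (fun z => u z s) x)
      (∑ i : Fin n, pd i (pd i (pd j (fun z => u z t))) x) (Icc 0 T) t := by
    intro j
    have h0 := mixed_deriv hT hsmooth ht' x j
    have heq : (fun z => derivWithin (fun r => u z r) (Icc 0 T) t)
        = fun z => lap (fun y => u y t) z := funext fun z => by rw [hheat z t ht']
    rw [heq] at h0
    have hval : fderiv ℝ (fun z => lap (fun y => u y t) z) x (EuclideanSpace.single j 1)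
        = ∑ i : Fin n, pd i (pd i (pd j (fun y => u y t))) x := pd_lap hfA j x
    rw [hval] at h0
    exact h0
  have hNt : HasDerivWithinAt
      (fun s => ∑ j : Fin n, pd j (fun z => u z s) x * pd j (fun z => u z s) x)
      (∑ j : Fin n, ((∑ i : Fin n, pd i (pd i (pd j (fun z => u z t))) x)
          * pd j (fun z => u z t) x
        + pd j (fun z => u z t) x * (∑ i : Fin n, pd i (pd i (pd j (fun z => u z t))) x)))
      (Icc 0 T) t :=
    HasDerivWithinAt.fun_sum fun j _ => (hW j).mul (hW j)
  have hinvt : HasDerivWithinAt (fun s => (u x s)⁻¹)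
      (-(u x t ^ 2)⁻¹ * (∑ i : Fin n, pd i (pd i (fun z => u z t)) x)) (Icc 0 T) t :=
    (hasDerivAt_inv hne).comp_hasDerivWithinAt t hu'
  have hlogt : HasDerivWithinAt (fun s => Real.log (u x s))
      ((u x t)⁻¹ * (∑ i : Fin n, pd i (pd i (fun z => u z t)) x)) (Icc 0 T) t :=
    (Real.hasDerivAt_log hne).comp_hasDerivWithinAt t hu'
  have hid : HasDerivWithinAt (fun s : ℝ => s) 1 (Icc 0 T) t :=
    (hasDerivAt_id t).hasDerivWithinAt
  have hΘ : HasDerivWithinAt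
      (fun s => s * ((∑ j : Fin n, pd j (fun z => u z s) x * pd j (fun z => u z s) x)
          * (u x s)⁻¹) - u x s * (Real.log M - Real.log (u x s)))
      (1 * ((∑ j : Fin n, pd j (fun z => u z t) x * pd j (fun z => u z t) x) * (u x t)⁻¹)
        + t * ((∑ j : Fin n, ((∑ i : Fin n, pd i (pd i (pd j (fun z => u z t))) x)
              * pd j (fun z => u z t) x
            + pd j (fun z => u z t) x * (∑ i : Fin n, pd i (pd i (pd j (fun z => u z t))) x)))
              * (u x t)⁻¹
          + (∑ j : Fin n, pd j (fun z => u z t) x * pd j (fun z => u z t) x)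
              * (-(u x t ^ 2)⁻¹ * (∑ i : Fin n, pd i (pd i (fun z => u z t)) x)))
        - ((∑ i : Fin n, pd i (pd i (fun z => u z t)) x) * (Real.log M - Real.log (u x t))
          + u x t * (0 - (u x t)⁻¹ * (∑ i : Fin n, pd i (pd i (fun z => u z t)) x))))
      (Icc 0 T) t :=
    (hid.mul (hNt.mul hinvt)).sub (hu'.mul ((hasDerivWithinAt_const t (Icc 0 T) (Real.log M)).sub hlogt))
  have htime : derivWithin (fun s =>
        s * (‖gradient (fun z => u z s) x‖ ^ 2 / u x s)
          - u x s * Real.log (M / u x s)) (Icc 0 T) t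
      = 1 * ((∑ j : Fin n, pd j (fun z => u z t) x * pd j (fun z => u z t) x) * (u x t)⁻¹)
        + t * ((∑ j : Fin n, ((∑ i : Fin n, pd i (pd i (pd j (fun z => u z t))) x)
              * pd j (fun z => u z t) x
            + pd j (fun z => u z t) x * (∑ i : Fin n, pd i (pd i (pd j (fun z => u z t))) x)))
              * (u x t)⁻¹
          + (∑ j : Fin n, pd j (fun z => u z t) x * pd j (fun z => u z t) x)
              * (-(u x t ^ 2)⁻¹ * (∑ i : Fin n, pd i (pd i (fun z => u z t)) x)))
        - ((∑ i : Fin n, pd i (pd i (fun z => u z t)) x) * (Real.log M - Real.log (u x t))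
          + u x t * (0 - (u x t)⁻¹ * (∑ i : Fin n, pd i (pd i (fun z => u z t)) x))) := by
    have heqOn : EqOn (fun s =>
          s * (‖gradient (fun z => u z s) x‖ ^ 2 / u x s)
            - u x s * Real.log (M / u x s))
        (fun s => s * ((∑ j : Fin n, pd j (fun z => u z s) x * pd j (fun z => u z s) x)
          * (u x s)⁻¹) - u x s * (Real.log M - Real.log (u x s))) (Icc 0 T) := by
      intro s hs
      simp only
      rw [grad_norm_sq, Real.log_div hM.ne' (hpos x s hs).ne', div_eq_mul_inv]
    rw [derivWithin_congr heqOn (heqOn ht')]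
    exact hΘ.derivWithin (uniqueDiffOn_Icc hT t ht')
  rw [hlap, htime]
  have hkey := key_algebra n (fun j => pd j (fun z => u z t) x)
      (fun j i => pd i (pd j (fun z => u z t)) x)
      (fun j i => pd i (pd i (pd j (fun z => u z t))) x)
      (u x t) (Real.log M - Real.log (u x t)) t hne
  rw [sub_eq_iff_eq_add] at hkey
  rw [hkey]
  have h2 : (0:ℝ) ≤ 2 * t / (u x t) ^ 3
      * ∑ i : Fin n, ∑ j : Fin n, ((u x t) * pd i (pd j (fun z => u z t)) x
          - pd j (fun z => u z t) x * pd i (fun z => u z t) x)^2 := by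
    apply mul_nonneg
    · apply div_nonneg (by linarith [ht.1]) (pow_nonneg (hpos x t ht').le 3)
    · exact Finset.sum_nonneg fun i _ => Finset.sum_nonneg fun j _ => sq_nonneg _
  linarith [h2]
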